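/- Fix t, λ ∈ ℂ. Let D(z) = 6z³ + 2t·z² + λ and let N(z₁, z₂, z₃) = 2z₁·(15z₁⁵ − (9z₂ + 9z₃ − 4t)·z₁⁴ − (2t·z₂ + 2t·z₃ − 3z₂z₃)·z₁³ + λ·z₁² − λ·z₂z₃). Then there exists a polynomial Q ∈ ℂ[z₁, z₂, z₃] such that for all pairwise distinct z₁, z₂, z₃ ∈ ℂ with D(z₁), D(z₂), D(z₃) all nonzero, one has N(z₁,z₂,z₃)/((z₁−z₂)³(z₁−z₃)³·D(z₁)²) + N(z₂,z₃,z₁)/((z₂−z₃)³(z₂−z₁)³·D(z₂)²) + N(z₃,z₁,z₂)/((z₃−z₁)³(z₃−z₂)³·D(z₃)²) = Q(z₁,z₂,z₃)/(D(z₁)²·D(z₂)²·D(z₃)²). In particular, the left-hand side has no poles along the diagonals z_i = z_j. -/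
import Mathlib


/-- Denominator `D(z) = 6z³ + 2t·z² + λ` for the (1,4) spectral curve. -/
noncomputable def D14 (t lam z : ℂ) : ℂ := 6 * z ^ 3 + 2 * t * z ^ 2 + lam

/-- Numerator `N(z₁,z₂,z₃)` appearing in `W₀,₃` for the (1,4) spectral curve. -/
noncomputable def N14 (t lam z₁ z₂ z₃ : ℂ) : ℂ :=
  2 * z₁ * (15 * z₁ ^ 5 - (9 * z₂ + 9 * z₃ - 4 * t) * z₁ ^ 4
    - (2 * t * z₂ + 2 * t * z₃ - 3 * z₂ * z₃) * z₁ ^ 3 + lam * z₁ ^ 2 - lam * z₂ * z₃)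

def q14aux0 {R : Type*} [CommRing R] (t lam x y z : R) : R := 6 * lam ^ 4 - 8 * z * t ^ 2 * lam ^ 3 - 48 * z ^ 2 * t * lam ^ 3 - 72 * z ^ 3 * lam ^ 3 - 8 * y * t ^ 2 * lam ^ 3 - 96 * y * z * t * lam ^ 3 - 216 * y * z ^ 2 * lam ^ 3 + 16 * y * z ^ 2 * t ^ 3 * lam ^ 2

def q14aux1 {R : Type*} [CommRing R] (t lam x y z : R) : R := 96 * y * z ^ 3 * t ^ 2 * lam ^ 2 + 144 * y * z ^ 4 * t * lam ^ 2 - 48 * y ^ 2 * t * lam ^ 3 - 216 * y ^ 2 * z * lam ^ 3 + 16 * y ^ 2 * z * t ^ 3 * lam ^ 2 + 168 * y ^ 2 * z ^ 2 * t ^ 2 * lam ^ 2 + 576 * y ^ 2 * z ^ 3 * t * lam ^ 2 + 648 * y ^ 2 * z ^ 4 * lam ^ 2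

def q14aux2 {R : Type*} [CommRing R] (t lam x y z : R) : R := - 72 * y ^ 3 * lam ^ 3 + 96 * y ^ 3 * z * t ^ 2 * lam ^ 2 + 576 * y ^ 3 * z ^ 2 * t * lam ^ 2 + 864 * y ^ 3 * z ^ 3 * lam ^ 2 + 144 * y ^ 4 * z * t * lam ^ 2 + 648 * y ^ 4 * z ^ 2 * lam ^ 2 - 8 * x * t ^ 2 * lam ^ 3 - 96 * x * z * t * lam ^ 3

def q14aux3 {R : Type*} [CommRing R] (t lam x y z : R) : R := - 216 * x * z ^ 2 * lam ^ 3 + 16 * x * z ^ 2 * t ^ 3 * lam ^ 2 + 96 * x * z ^ 3 * t ^ 2 * lam ^ 2 + 144 * x * z ^ 4 * t * lam ^ 2 - 96 * x * y * t * lam ^ 3 - 288 * x * y * z * lam ^ 3 + 64 * x * y * z * t ^ 3 * lam ^ 2 + 480 * x * y * z ^ 2 * t ^ 2 * lam ^ 2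

def q14aux4 {R : Type*} [CommRing R] (t lam x y z : R) : R := 1152 * x * y * z ^ 3 * t * lam ^ 2 + 864 * x * y * z ^ 4 * lam ^ 2 - 216 * x * y ^ 2 * lam ^ 3 + 16 * x * y ^ 2 * t ^ 3 * lam ^ 2 + 480 * x * y ^ 2 * z * t ^ 2 * lam ^ 2 + 2160 * x * y ^ 2 * z ^ 2 * t * lam ^ 2 - 32 * x * y ^ 2 * z ^ 2 * t ^ 4 * lam + 2592 * x * y ^ 2 * z ^ 3 * lam ^ 2

def q14aux5 {R : Type*} [CommRing R] (t lam x y z : R) : R := - 192 * x * y ^ 2 * z ^ 3 * t ^ 3 * lam - 288 * x * y ^ 2 * z ^ 4 * t ^ 2 * lam + 96 * x * y ^ 3 * t ^ 2 * lam ^ 2 + 1152 * x * y ^ 3 * z * t * lam ^ 2 + 2592 * x * y ^ 3 * z ^ 2 * lam ^ 2 - 192 * x * y ^ 3 * z ^ 2 * t ^ 3 * lam - 1152 * x * y ^ 3 * z ^ 3 * t ^ 2 * lam - 1728 * x * y ^ 3 * z ^ 4 * t * lam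

def q14aux6 {R : Type*} [CommRing R] (t lam x y z : R) : R := 144 * x * y ^ 4 * t * lam ^ 2 + 864 * x * y ^ 4 * z * lam ^ 2 - 288 * x * y ^ 4 * z ^ 2 * t ^ 2 * lam - 1728 * x * y ^ 4 * z ^ 3 * t * lam - 2592 * x * y ^ 4 * z ^ 4 * lam - 48 * x ^ 2 * t * lam ^ 3 - 216 * x ^ 2 * z * lam ^ 3 + 16 * x ^ 2 * z * t ^ 3 * lam ^ 2

def q14aux7 {R : Type*} [CommRing R] (t lam x y z : R) : R := 168 * x ^ 2 * z ^ 2 * t ^ 2 * lam ^ 2 + 576 * x ^ 2 * z ^ 3 * t * lam ^ 2 + 648 * x ^ 2 * z ^ 4 * lam ^ 2 - 216 * x ^ 2 * y * lam ^ 3 + 16 * x ^ 2 * y * t ^ 3 * lam ^ 2 + 480 * x ^ 2 * y * z * t ^ 2 * lam ^ 2 + 2160 * x ^ 2 * y * z ^ 2 * t * lam ^ 2 - 32 * x ^ 2 * y * z ^ 2 * t ^ 4 * lam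

def q14aux8 {R : Type*} [CommRing R] (t lam x y z : R) : R := 2592 * x ^ 2 * y * z ^ 3 * lam ^ 2 - 192 * x ^ 2 * y * z ^ 3 * t ^ 3 * lam - 288 * x ^ 2 * y * z ^ 4 * t ^ 2 * lam + 168 * x ^ 2 * y ^ 2 * t ^ 2 * lam ^ 2 + 2160 * x ^ 2 * y ^ 2 * z * t * lam ^ 2 - 32 * x ^ 2 * y ^ 2 * z * t ^ 4 * lam + 5832 * x ^ 2 * y ^ 2 * z ^ 2 * lam ^ 2 - 480 * x ^ 2 * y ^ 2 * z ^ 2 * t ^ 3 * lam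

def q14aux9 {R : Type*} [CommRing R] (t lam x y z : R) : R := - 2016 * x ^ 2 * y ^ 2 * z ^ 3 * t ^ 2 * lam - 2592 * x ^ 2 * y ^ 2 * z ^ 4 * t * lam + 576 * x ^ 2 * y ^ 3 * t * lam ^ 2 + 2592 * x ^ 2 * y ^ 3 * z * lam ^ 2 - 192 * x ^ 2 * y ^ 3 * z * t ^ 3 * lam - 2016 * x ^ 2 * y ^ 3 * z ^ 2 * t ^ 2 * lam - 6912 * x ^ 2 * y ^ 3 * z ^ 3 * t * lam - 7776 * x ^ 2 * y ^ 3 * z ^ 4 * lam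

def q14aux10 {R : Type*} [CommRing R] (t lam x y z : R) : R := 648 * x ^ 2 * y ^ 4 * lam ^ 2 - 288 * x ^ 2 * y ^ 4 * z * t ^ 2 * lam - 2592 * x ^ 2 * y ^ 4 * z ^ 2 * t * lam - 7776 * x ^ 2 * y ^ 4 * z ^ 3 * lam - 72 * x ^ 3 * lam ^ 3 + 96 * x ^ 3 * z * t ^ 2 * lam ^ 2 + 576 * x ^ 3 * z ^ 2 * t * lam ^ 2 + 864 * x ^ 3 * z ^ 3 * lam ^ 2

def q14aux11 {R : Type*} [CommRing R] (t lam x y z : R) : R := 96 * x ^ 3 * y * t ^ 2 * lam ^ 2 + 1152 * x ^ 3 * y * z * t * lam ^ 2 + 2592 * x ^ 3 * y * z ^ 2 * lam ^ 2 - 192 * x ^ 3 * y * z ^ 2 * t ^ 3 * lam - 1152 * x ^ 3 * y * z ^ 3 * t ^ 2 * lam - 1728 * x ^ 3 * y * z ^ 4 * t * lam + 576 * x ^ 3 * y ^ 2 * t * lam ^ 2 + 2592 * x ^ 3 * y ^ 2 * z * lam ^ 2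

def q14aux12 {R : Type*} [CommRing R] (t lam x y z : R) : R := - 192 * x ^ 3 * y ^ 2 * z * t ^ 3 * lam - 2016 * x ^ 3 * y ^ 2 * z ^ 2 * t ^ 2 * lam - 6912 * x ^ 3 * y ^ 2 * z ^ 3 * t * lam - 7776 * x ^ 3 * y ^ 2 * z ^ 4 * lam + 864 * x ^ 3 * y ^ 3 * lam ^ 2 - 1152 * x ^ 3 * y ^ 3 * z * t ^ 2 * lam - 6912 * x ^ 3 * y ^ 3 * z ^ 2 * t * lam - 10368 * x ^ 3 * y ^ 3 * z ^ 3 * lam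

def q14aux13 {R : Type*} [CommRing R] (t lam x y z : R) : R := - 1728 * x ^ 3 * y ^ 4 * z * t * lam - 7776 * x ^ 3 * y ^ 4 * z ^ 2 * lam + 144 * x ^ 4 * z * t * lam ^ 2 + 648 * x ^ 4 * z ^ 2 * lam ^ 2 + 144 * x ^ 4 * y * t * lam ^ 2 + 864 * x ^ 4 * y * z * lam ^ 2 - 288 * x ^ 4 * y * z ^ 2 * t ^ 2 * lam - 1728 * x ^ 4 * y * z ^ 3 * t * lam

def q14aux14 {R : Type*} [CommRing R] (t lam x y z : R) : R := - 2592 * x ^ 4 * y * z ^ 4 * lam + 648 * x ^ 4 * y ^ 2 * lam ^ 2 - 288 * x ^ 4 * y ^ 2 * z * t ^ 2 * lam - 2592 * x ^ 4 * y ^ 2 * z ^ 2 * t * lam - 7776 * x ^ 4 * y ^ 2 * z ^ 3 * lam - 1728 * x ^ 4 * y ^ 3 * z * t * lam - 7776 * x ^ 4 * y ^ 3 * z ^ 2 * lam - 2592 * x ^ 4 * y ^ 4 * z * lam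

def q14aux15 {R : Type*} [CommRing R] (t lam x y z : R) : R := 7776 * x ^ 4 * y ^ 4 * z ^ 4

def q14 {R : Type*} [CommRing R] (t lam x y z : R) : R :=
  q14aux0 t lam x y z + q14aux1 t lam x y z + q14aux2 t lam x y z + q14aux3 t lam x y z + q14aux4 t lam x y z + q14aux5 t lam x y z + q14aux6 t lam x y z + q14aux7 t lam x y z + q14aux8 t lam x y z + q14aux9 t lam x y z + q14aux10 t lam x y z + q14aux11 t lam x y z + q14aux12 t lam x y z + q14aux13 t lam x y z + q14aux14 t lam x y z + q14aux15 t lam x y z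

lemma q14_map {R S : Type*} [CommRing R] [CommRing S] (f : R →+* S)
    (t lam x y z : R) :
    f (q14 t lam x y z) = q14 (f t) (f lam) (f x) (f y) (f z) := by
  simp only [q14, q14aux0, q14aux1, q14aux2, q14aux3, q14aux4, q14aux5, q14aux6, q14aux7, q14aux8, q14aux9, q14aux10, q14aux11, q14aux12, q14aux13, q14aux14, q14aux15, map_add, map_sub, map_mul, map_pow, map_ofNat, map_neg]

set_option maxHeartbeats 2000000 in
lemma sum3_div (n1 n2 n3 d1 d2 d3 a b c : ℂ)
    (ha : a ≠ 0) (hb : b ≠ 0) (hc : c ≠ 0)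
    (hd1 : d1 ≠ 0) (hd2 : d2 ≠ 0) (hd3 : d3 ≠ 0) :
    n1 / (a ^ 3 * b ^ 3 * d1 ^ 2)
      + n2 / (c ^ 3 * (-a) ^ 3 * d2 ^ 2)
      + n3 / ((-b) ^ 3 * (-c) ^ 3 * d3 ^ 2)
      = (n1 * (c ^ 3 * d2 ^ 2 * d3 ^ 2)
          - n2 * (b ^ 3 * d1 ^ 2 * d3 ^ 2)
          + n3 * (a ^ 3 * d1 ^ 2 * d2 ^ 2))
        / (a ^ 3 * b ^ 3 * c ^ 3 * (d1 ^ 2 * d2 ^ 2 * d3 ^ 2)) := by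
  have ha' : (-a) ≠ 0 := neg_ne_zero.mpr ha
  have hb' : (-b) ≠ 0 := neg_ne_zero.mpr hb
  have hc' : (-c) ≠ 0 := neg_ne_zero.mpr hc
  have e1 : a ^ 3 * b ^ 3 * d1 ^ 2 ≠ 0 :=
    mul_ne_zero (mul_ne_zero (pow_ne_zero _ ha) (pow_ne_zero _ hb)) (pow_ne_zero _ hd1)
  have e2 : c ^ 3 * (-a) ^ 3 * d2 ^ 2 ≠ 0 :=
    mul_ne_zero (mul_ne_zero (pow_ne_zero _ hc) (pow_ne_zero _ ha')) (pow_ne_zero _ hd2)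
  have e3 : (-b) ^ 3 * (-c) ^ 3 * d3 ^ 2 ≠ 0 :=
    mul_ne_zero (mul_ne_zero (pow_ne_zero _ hb') (pow_ne_zero _ hc')) (pow_ne_zero _ hd3)
  have e4 : a ^ 3 * b ^ 3 * c ^ 3 * (d1 ^ 2 * d2 ^ 2 * d3 ^ 2) ≠ 0 :=
    mul_ne_zero (mul_ne_zero (mul_ne_zero (pow_ne_zero _ ha) (pow_ne_zero _ hb))
      (pow_ne_zero _ hc))
      (mul_ne_zero (mul_ne_zero (pow_ne_zero _ hd1) (pow_ne_zero _ hd2)) (pow_ne_zero _ hd3))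
  rw [div_add_div _ _ e1 e2, div_add_div _ _ (mul_ne_zero e1 e2) e3,
    div_eq_div_iff (mul_ne_zero (mul_ne_zero e1 e2) e3) e4]
  ring

set_option maxHeartbeats 4000000 in
lemma key14 (t lam z₁ z₂ z₃ : ℂ) :
    N14 t lam z₁ z₂ z₃ * ((z₂ - z₃) ^ 3 * (D14 t lam z₂) ^ 2 * (D14 t lam z₃) ^ 2)
      - N14 t lam z₂ z₃ z₁ * ((z₁ - z₃) ^ 3 * (D14 t lam z₁) ^ 2 * (D14 t lam z₃) ^ 2)
      + N14 t lam z₃ z₁ z₂ * ((z₁ - z₂) ^ 3 * (D14 t lam z₁) ^ 2 * (D14 t lam z₂) ^ 2)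
      = q14 t lam z₁ z₂ z₃ * ((z₁ - z₂) ^ 3 * (z₁ - z₃) ^ 3 * (z₂ - z₃) ^ 3) := by
  simp only [N14, D14, q14, q14aux0, q14aux1, q14aux2, q14aux3, q14aux4, q14aux5, q14aux6, q14aux7, q14aux8, q14aux9, q14aux10, q14aux11, q14aux12, q14aux13, q14aux14, q14aux15]
  ring

set_option maxHeartbeats 1000000 in
/-- The symmetrized sum defining `W₀,₃` for the (1,4) curve has no poles
along the diagonals `zᵢ = zⱼ`: it equals `Q(z₁,z₂,z₃)/(D(z₁)²D(z₂)²D(z₃)²)` for some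
polynomial `Q`. -/
theorem W03_holomorphic_on_diagonal_14 (t lam : ℂ) :
    ∃ Q : MvPolynomial (Fin 3) ℂ, ∀ z₁ z₂ z₃ : ℂ,
      z₁ ≠ z₂ → z₁ ≠ z₃ → z₂ ≠ z₃ →
      D14 t lam z₁ ≠ 0 → D14 t lam z₂ ≠ 0 → D14 t lam z₃ ≠ 0 →
      N14 t lam z₁ z₂ z₃ / ((z₁ - z₂) ^ 3 * (z₁ - z₃) ^ 3 * (D14 t lam z₁) ^ 2)
        + N14 t lam z₂ z₃ z₁ / ((z₂ - z₃) ^ 3 * (z₂ - z₁) ^ 3 * (D14 t lam z₂) ^ 2)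
        + N14 t lam z₃ z₁ z₂ / ((z₃ - z₁) ^ 3 * (z₃ - z₂) ^ 3 * (D14 t lam z₃) ^ 2)
      = MvPolynomial.eval ![z₁, z₂, z₃] Q /
          ((D14 t lam z₁) ^ 2 * (D14 t lam z₂) ^ 2 * (D14 t lam z₃) ^ 2) := by
  refine ⟨q14 (MvPolynomial.C t) (MvPolynomial.C lam)
      (MvPolynomial.X 0) (MvPolynomial.X 1) (MvPolynomial.X 2), ?_⟩
  intro z₁ z₂ z₃ h12 h13 h23 hD1 hD2 hD3
  have hev : MvPolynomial.eval ![z₁, z₂, z₃]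
      (q14 (MvPolynomial.C t) (MvPolynomial.C lam)
        (MvPolynomial.X 0) (MvPolynomial.X 1) (MvPolynomial.X 2))
      = q14 t lam z₁ z₂ z₃ := by
    rw [q14_map (MvPolynomial.eval ![z₁, z₂, z₃])]
    simp only [MvPolynomial.eval_C, MvPolynomial.eval_X, Matrix.cons_val_zero,
      Matrix.cons_val_one, Matrix.head_cons, Matrix.cons_val_two, Matrix.tail_cons]
  rw [hev]
  have h12' : z₁ - z₂ ≠ 0 := sub_ne_zero.mpr h12
  have h13' : z₁ - z₃ ≠ 0 := sub_ne_zero.mpr h13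
  have h23' : z₂ - z₃ ≠ 0 := sub_ne_zero.mpr h23
  rw [show z₂ - z₁ = -(z₁ - z₂) from (neg_sub _ _).symm,
    show z₃ - z₁ = -(z₁ - z₃) from (neg_sub _ _).symm,
    show z₃ - z₂ = -(z₂ - z₃) from (neg_sub _ _).symm]
  rw [sum3_div _ _ _ _ _ _ _ _ _ h12' h13' h23' hD1 hD2 hD3, key14]
  rw [mul_comm ((z₁ - z₂) ^ 3 * (z₁ - z₃) ^ 3 * (z₂ - z₃) ^ 3)]
  exact mul_div_mul_right _ _ (by
    exact mul_ne_zero (mul_ne_zero (pow_ne_zero 3 h12') (pow_ne_zero 3 h13'))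
      (pow_ne_zero 3 h23'))
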